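/- In PSL₂(ℤ[1/2]), the subgroup generated by the images of the two matrices c = [[0, 1], [-1, 0]] and t = [[1, -1/4], [0, 1]] is the whole group: the Subgroup.closure of the set consisting of these two elements equals ⊤. -/

import Mathlib

/-- The ring `ℤ[1/2]`, the localization of `ℤ` away from `2`. -/
abbrev Zhalf : Type := Localization.Away (2 : ℤ)

/-- `1/2` as an element of `ℤ[1/2]`. -/
noncomputable def half : Zhalf := IsLocalization.Away.invSelf (2 : ℤ)

/-- `SL₂(ℤ[1/2])`. -/
abbrev SL2Zhalf := Matrix.SpecialLinearGroup (Fin 2) Zhalf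

/-- `PSL₂(ℤ[1/2])`, the quotient of `SL₂(ℤ[1/2])` by its center. -/
abbrev PSL2Zhalf := SL2Zhalf ⧸ Subgroup.center SL2Zhalf

/-- The matrix `c = [[0, 1], [-1, 0]]` as an element of `SL₂(ℤ[1/2])`. -/
noncomputable def matC : SL2Zhalf :=
  ⟨!![(0 : Zhalf), 1; -1, 0], by simp [Matrix.det_fin_two_of]⟩

/-- The matrix `t = [[1, -1/4], [0, 1]]` as an element of `SL₂(ℤ[1/2])`. -/
noncomputable def matT : SL2Zhalf :=
  ⟨!![(1 : Zhalf), -(half * half); 0, 1], by simp [Matrix.det_fin_two_of]⟩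

lemma two_mul_half : (2 : Zhalf) * half = 1 := by
  have := IsLocalization.Away.mul_invSelf (S := Zhalf) (2 : ℤ)
  simpa [half] using this

lemma isUnit_two_pow (n : ℕ) : IsUnit ((2 : Zhalf) ^ n) :=
  (IsUnit.of_mul_eq_one half two_mul_half).pow n

noncomputable def matE (a : Zhalf) : SL2Zhalf :=
  ⟨!![(1 : Zhalf), a; 0, 1], by simp [Matrix.det_fin_two_of]⟩

lemma matE_mul (a b : Zhalf) : matE a * matE b = matE (a + b) := by
  apply Subtype.ext
  simp only [Matrix.SpecialLinearGroup.coe_mul]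
  ext i j
  fin_cases i <;> fin_cases j <;>
    simp [matE, Matrix.mul_apply, Fin.sum_univ_two] <;> ring

lemma matE_zero : matE 0 = 1 := by
  apply Subtype.ext
  simp [matE, Matrix.SpecialLinearGroup.coe_one, Matrix.one_fin_two]

lemma matE_zpow (a : Zhalf) (m : ℤ) : matE a ^ m = matE ((m : Zhalf) * a) := by
  induction m using Int.induction_on with
  | zero => simpa using matE_zero.symm
  | succ n ih =>
      rw [zpow_add_one, ih, matE_mul]
      push_cast
      ring_nf
  | pred n ih =>
      rw [zpow_sub_one, ih]
      have : matE (((-n : ℤ) - 1 : ℤ) * a) * matE a = matE ((-n : ℤ) * a) := by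
        rw [matE_mul]; push_cast; ring_nf
      calc matE ((-n : ℤ) * a) * (matE a)⁻¹
          = matE (((-n : ℤ) - 1 : ℤ) * a) * matE a * (matE a)⁻¹ := by rw [this]
        _ = matE (((-n : ℤ) - 1 : ℤ) * a) := by group
        _ = matE (((-n - 1 : ℤ) : Zhalf) * a) := by push_cast; ring_nf

lemma matC_inv : matC⁻¹ = ⟨!![(0 : Zhalf), -1; 1, 0], by simp [Matrix.det_fin_two_of]⟩ := by
  apply inv_eq_of_mul_eq_one_right
  apply Subtype.ext
  erw [Matrix.SpecialLinearGroup.coe_mul]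
  ext i j
  fin_cases i <;> fin_cases j <;>
    simp [matC, Matrix.mul_apply, Fin.sum_univ_two] <;> ring

noncomputable def matF (y : Zhalf) : SL2Zhalf :=
  ⟨!![(1 : Zhalf), 0; y, 1], by simp [Matrix.det_fin_two_of]⟩

lemma matF_eq (y : Zhalf) : matF y = matC * matE (-y) * matC⁻¹ := by
  rw [matC_inv]
  apply Subtype.ext
  erw [Matrix.SpecialLinearGroup.coe_mul, Matrix.SpecialLinearGroup.coe_mul]
  ext i j
  fin_cases i <;> fin_cases j <;>
    simp [matF, matC, matE, Matrix.mul_apply, Fin.sum_univ_two] <;> ring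

noncomputable def matD : SL2Zhalf :=
  ⟨!![(2 : Zhalf), 0; 0, half], by simp [Matrix.det_fin_two_of, two_mul_half]⟩

lemma matD_eq : matD = matE 2 * matF (-half) * matE 2 * matC⁻¹ := by
  rw [matC_inv]
  apply Subtype.ext
  erw [Matrix.SpecialLinearGroup.coe_mul, Matrix.SpecialLinearGroup.coe_mul, Matrix.SpecialLinearGroup.coe_mul]
  ext i j
  fin_cases i <;> fin_cases j <;>
    simp [matD, matE, matF, matC, Matrix.mul_apply, Fin.sum_univ_two] <;>
    first
    | ring1
    | linear_combination (-(4 : Zhalf)) * two_mul_half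
    | linear_combination (-(3 : Zhalf)) * two_mul_half
    | linear_combination (-(2 : Zhalf)) * two_mul_half
    | linear_combination (-(1 : Zhalf)) * two_mul_half
    | linear_combination ((1 : Zhalf)) * two_mul_half
    | linear_combination ((2 : Zhalf)) * two_mul_half
    | linear_combination ((3 : Zhalf)) * two_mul_half
    | linear_combination ((4 : Zhalf)) * two_mul_half
    | left; linear_combination (-(1 : Zhalf)) * two_mul_half

lemma matD_inv :
    matD⁻¹ = ⟨!![half, 0; 0, (2 : Zhalf)],
      by simp [Matrix.det_fin_two_of]; linear_combination two_mul_half⟩ := by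
  apply inv_eq_of_mul_eq_one_right
  apply Subtype.ext
  erw [Matrix.SpecialLinearGroup.coe_mul]
  ext i j
  fin_cases i <;> fin_cases j <;>
    simp [matD, Matrix.mul_apply, Fin.sum_univ_two, two_mul_half] <;>
    first
    | ring1
    | linear_combination (2 : Zhalf) * two_mul_half
    | linear_combination two_mul_half

lemma matDinv_conj (y : Zhalf) : matD⁻¹ * matE y * matD = matE (half * half * y) := by
  rw [matD_inv]
  apply Subtype.ext
  erw [Matrix.SpecialLinearGroup.coe_mul, Matrix.SpecialLinearGroup.coe_mul]
  ext i j
  fin_cases i <;> fin_cases j <;>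
    simp [matD, matE, Matrix.mul_apply, Fin.sum_univ_two, two_mul_half] <;>
    first
    | ring1
    | linear_combination two_mul_half
    | linear_combination (half * y) * two_mul_half
    | linear_combination (-half * y) * two_mul_half
    | linear_combination (y - half * half * y * 2) * two_mul_half

/-- The subgroup of `SL₂(ℤ[1/2])` generated by `c` and `t`. -/
noncomputable def KK : Subgroup SL2Zhalf := Subgroup.closure {matC, matT}

lemma matC_mem : matC ∈ KK := Subgroup.subset_closure (by simp)
lemma matT_mem : matT ∈ KK := Subgroup.subset_closure (by simp)

lemma matE_int_quarter_mem (m : ℤ) : matE ((m : Zhalf) * (half * half)) ∈ KK := by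
  have h : matE ((m : Zhalf) * (half * half)) = matT ^ (-m) := by
    have : matT = matE (-(half * half)) := rfl
    rw [this, matE_zpow]
    push_cast
    ring_nf
  rw [h]
  exact zpow_mem matT_mem _

lemma four_mul_quarter : (4 : Zhalf) * (half * half) = 1 := by
  have h := two_mul_half
  linear_combination (2 * half + 1) * h

lemma matE2_mem : matE 2 ∈ KK := by
  have h := matE_int_quarter_mem 8
  have e : ((8 : ℤ) : Zhalf) * (half * half) = 2 := by
    push_cast
    linear_combination (2 : Zhalf) * four_mul_quarter
  rwa [e] at h

lemma matEhalf_mem : matE half ∈ KK := by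
  have h := matE_int_quarter_mem 2
  have e : ((2 : ℤ) : Zhalf) * (half * half) = half := by
    push_cast
    linear_combination half * two_mul_half
  rwa [e] at h

lemma matF_mem_of (y : Zhalf) (h : matE (-y) ∈ KK) : matF y ∈ KK := by
  rw [matF_eq]
  exact mul_mem (mul_mem matC_mem h) (inv_mem matC_mem)

lemma matD_mem : matD ∈ KK := by
  rw [matD_eq]
  have hF : matF (-half) ∈ KK := matF_mem_of _ (by simpa using matEhalf_mem)
  exact mul_mem (mul_mem (mul_mem matE2_mem hF) matE2_mem) (inv_mem matC_mem)

lemma matE_int_quarter_pow_mem (k : ℕ) : ∀ m : ℤ, matE ((m : Zhalf) * (half * half) ^ k) ∈ KK := by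
  induction k with
  | zero =>
      intro m
      have h := matE_int_quarter_mem (4 * m)
      have e : ((4 * m : ℤ) : Zhalf) * (half * half) = (m : Zhalf) * (half * half) ^ 0 := by
        push_cast
        linear_combination (m : Zhalf) * four_mul_quarter
      rwa [e] at h
  | succ k ih =>
      intro m
      have h := ih m
      have h2 : matD⁻¹ * matE ((m : Zhalf) * (half * half) ^ k) * matD ∈ KK :=
        mul_mem (mul_mem (inv_mem matD_mem) h) matD_mem
      rw [matDinv_conj] at h2
      have e : half * half * ((m : Zhalf) * (half * half) ^ k)
          = (m : Zhalf) * (half * half) ^ (k + 1) := by ring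
      rwa [e] at h2

lemma exists_num (x : Zhalf) : ∃ (m : ℤ) (n : ℕ), x * 2 ^ n = (m : Zhalf) := by
  obtain ⟨⟨m, d⟩, h⟩ := IsLocalization.surj (Submonoid.powers (2 : ℤ)) x
  obtain ⟨n, hn⟩ := d.2
  refine ⟨m, n, ?_⟩
  have h2 : (algebraMap ℤ Zhalf) (d : ℤ) = (2 : Zhalf) ^ n := by
    rw [← hn]
    show (algebraMap ℤ Zhalf) (2 ^ n) = _
    rw [map_pow, map_ofNat]
  rw [← h2]
  simpa [algebraMap_int_eq] using h

lemma matE_mem (a : Zhalf) : matE a ∈ KK := by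
  obtain ⟨m, n, h⟩ := exists_num a
  have key : a = ((m * 2 ^ n : ℤ) : Zhalf) * (half * half) ^ n := by
    have hu := isUnit_two_pow (2 * n)
    apply hu.mul_right_cancel
    have e1 : a * (2 : Zhalf) ^ (2 * n) = ((m : Zhalf)) * 2 ^ n := by
      rw [two_mul, pow_add, ← mul_assoc, h]
    have e2 : ((m * 2 ^ n : ℤ) : Zhalf) * (half * half) ^ n * (2 : Zhalf) ^ (2 * n)
        = ((m : Zhalf)) * 2 ^ n := by
      push_cast
      have h1 : ((half * half) * 4 : Zhalf) ^ n = 1 := by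
        rw [show ((half * half) * 4 : Zhalf) = 4 * (half * half) by ring, four_mul_quarter,
          one_pow]
      have h4 : (2 : Zhalf) ^ (2 * n) = (4 : Zhalf) ^ n := by
        rw [pow_mul]; norm_num
      rw [h4]
      calc (m : Zhalf) * 2 ^ n * (half * half) ^ n * (4 : Zhalf) ^ n
          = (m : Zhalf) * 2 ^ n * ((half * half * 4) ^ n) := by
            rw [mul_pow]; ring
        _ = (m : Zhalf) * 2 ^ n := by rw [h1, mul_one]
    rw [e1, e2]
  rw [key]
  exact matE_int_quarter_pow_mem n _

lemma matF_mem (y : Zhalf) : matF y ∈ KK := matF_mem_of y (matE_mem _)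

lemma detM (M : SL2Zhalf) : M 0 0 * M 1 1 - M 0 1 * M 1 0 = 1 := by
  have h := M.2
  rwa [Matrix.det_fin_two] at h

lemma upper_mem (M : SL2Zhalf) (h : M 1 0 = 0) : M ∈ KK := by
  have had : M 0 0 * M 1 1 = 1 := by
    have := detM M
    rw [h] at this
    linear_combination this
  have key : M = matE (M 0 0) * matF (-(M 1 1)) * matE (M 0 0) * matC⁻¹
      * matE (M 1 1 * M 0 1) := by
    rw [matC_inv]
    apply Subtype.ext
    erw [Matrix.SpecialLinearGroup.coe_mul, Matrix.SpecialLinearGroup.coe_mul, Matrix.SpecialLinearGroup.coe_mul, Matrix.SpecialLinearGroup.coe_mul]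
    ext i j
    fin_cases i <;> fin_cases j <;>
      simp [matE, matF, Matrix.mul_apply, Fin.sum_univ_two, h] <;>
      first
      | ring1
      | linear_combination (M 0 0) * had
      | linear_combination (-(M 0 0)) * had
      | linear_combination (M 0 1) * had
      | linear_combination (-(M 0 1)) * had
      | linear_combination (M 1 1) * had
      | linear_combination (-(M 1 1)) * had
      | linear_combination (M 1 1 * M 0 1) * had
      | linear_combination (-(M 1 1 * M 0 1)) * had
      | linear_combination ((1 : Zhalf) + M 1 1 * M 0 1) * had
      | linear_combination had
      | linear_combination (M 0 0 * M 0 1 * M 1 1 - M 0 1 - 1) * had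
      | linear_combination (M 0 0 * M 0 1 * M 1 1 - M 0 1 + M 0 1 * M 1 1 - 1) * had
      | left; linear_combination (-(1 : Zhalf)) * had
  rw [key]
  exact mul_mem (mul_mem (mul_mem (mul_mem (matE_mem _) (matF_mem _)) (matE_mem _))
    (inv_mem matC_mem)) (matE_mem _)

lemma CEM_entry (x : Zhalf) (M : SL2Zhalf) :
    (matC * matE x * M) 1 0 = -(M 0 0) - x * M 1 0 := by
  simp only [Matrix.SpecialLinearGroup.coe_mul]
  simp [matC, matE, Matrix.mul_apply, Fin.sum_univ_two]
  ring

lemma int_div (a c : ℤ) (hc : c ≠ 0) :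
    ∃ q r : ℤ, a + q * c = r ∧ 0 ≤ r ∧ r < (c.natAbs : ℤ) := by
  set b : ℤ := (c.natAbs : ℤ) with hb
  have hbpos : 0 < b := by
    simp only [hb]
    exact_mod_cast Int.natAbs_pos.mpr hc
  have hmod : a % b = a - b * (a / b) := Int.emod_def a b
  rcases Int.natAbs_eq c with hcb | hcb
  · refine ⟨-(a / b), a % b, ?_, Int.emod_nonneg a (by omega), Int.emod_lt_of_pos a hbpos⟩
    rw [← hb] at hcb
    rw [hmod, hcb]
    ring
  · refine ⟨a / b, a % b, ?_, Int.emod_nonneg a (by omega), Int.emod_lt_of_pos a hbpos⟩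
    rw [hmod]
    have : c = -b := by omega
    rw [this]
    ring

lemma odd_part (n : ℕ) : ∀ r : ℤ, r.natAbs = n →
    ∃ (s : ℕ) (r' : ℤ), (r' = 0 ∨ Odd r') ∧ r = 2 ^ s * r' ∧ r'.natAbs ≤ r.natAbs := by
  induction n using Nat.strong_induction_on with
  | _ n IH =>
    intro r hr
    by_cases h0 : r = 0
    · exact ⟨0, 0, Or.inl rfl, by simp [h0], by simp [h0]⟩
    rcases Int.even_or_odd r with ⟨t, ht⟩ | hodd
    · have ht' : r = 2 * t := by omega
      have h1 : t.natAbs < n := by omega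
      obtain ⟨s, r', hh, he, hle⟩ := IH t.natAbs h1 t rfl
      refine ⟨s + 1, r', hh, by rw [ht', he]; ring, by omega⟩
    · exact ⟨0, r, Or.inr hodd, by ring, le_refl _⟩

lemma half_mul_two : (half : Zhalf) * 2 = 1 := by linear_combination two_mul_half

lemma main_induction (n : ℕ) : ∀ (M : SL2Zhalf) (k j : ℕ) (c' : ℤ), (c' = 0 ∨ Odd c') →
    (M 1 0) * 2 ^ k = (c' : Zhalf) * 2 ^ j → c'.natAbs = n → M ∈ KK := by
  induction n using Nat.strong_induction_on with
  | _ n IH =>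
  intro M k j c' hodd hrep hn
  rcases hodd with rfl | hodd
  · -- c' = 0, so the bottom-left entry is zero
    have h0 : M 1 0 = 0 := by
      have h := hrep
      simp only [Int.cast_zero, zero_mul] at h
      have := (isUnit_two_pow k).mul_right_cancel (a := M 1 0) (c := 0) (by simpa using h)
      exact this
    exact upper_mem M h0
  · have hc0 : c' ≠ 0 := by
      rintro rfl
      obtain ⟨t, ht⟩ := hodd
      omega
    obtain ⟨a₀, k₁, ha⟩ := exists_num (M 0 0)
    obtain ⟨q, r, hqr, hr0, hrlt⟩ := int_div a₀ c' hc0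
    obtain ⟨s, r', hodd', hrs, hle⟩ := odd_part r.natAbs r rfl
    set x : Zhalf := (q : Zhalf) * 2 ^ k * half ^ (k₁ + j) with hxdef
    have hhalfpow : (half : Zhalf) ^ (k₁ + j) * 2 ^ (k₁ + j) = 1 := by
      rw [← mul_pow, half_mul_two, one_pow]
    have hx : (x * (M 1 0)) * 2 ^ k₁ = ((q * c' : ℤ) : Zhalf) := by
      have hu := isUnit_two_pow j
      apply hu.mul_right_cancel
      calc x * M 1 0 * 2 ^ k₁ * 2 ^ j
          = (q : Zhalf) * (M 1 0 * 2 ^ k) * (half ^ (k₁ + j) * 2 ^ (k₁ + j)) := by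
            rw [hxdef, pow_add]; ring
        _ = (q : Zhalf) * ((c' : Zhalf) * 2 ^ j) := by rw [hrep, hhalfpow, mul_one]
        _ = ((q * c' : ℤ) : Zhalf) * 2 ^ j := by push_cast; ring
    have hM₂entry : (matC * matE x * M) 1 0 = -(M 0 0) - x * M 1 0 := CEM_entry x M
    have hrep₂ : ((matC * matE x * M) 1 0) * 2 ^ k₁ = ((-r' : ℤ) : Zhalf) * 2 ^ s := by
      rw [hM₂entry]
      have e0 : (-(M 0 0) - x * M 1 0) * 2 ^ k₁
          = -(M 0 0 * 2 ^ k₁) - (x * M 1 0 * 2 ^ k₁) := by ring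
      rw [e0, ha, hx]
      have e' : -a₀ - q * c' = -r' * 2 ^ s := by
        linear_combination (-(1 : ℤ)) * hqr + (-(1 : ℤ)) * hrs
      have := congrArg (fun z : ℤ => (z : Zhalf)) e'
      push_cast at this ⊢
      linear_combination this
    have hlt : (-r').natAbs < n := by omega
    have hodd₂ : (-r' : ℤ) = 0 ∨ Odd (-r') := by
      rcases hodd' with h | h
      · left; simp [h]
      · right; exact h.neg
    have hM₂ : matC * matE x * M ∈ KK := IH (-r').natAbs hlt _ k₁ s (-r') hodd₂ hrep₂ rfl
    have hMeq : M = (matC * matE x)⁻¹ * (matC * matE x * M) := by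
      rw [inv_mul_cancel_left]
    rw [hMeq]
    exact mul_mem (inv_mem (mul_mem matC_mem (matE_mem x))) hM₂

lemma KK_eq_top : KK = ⊤ := by
  rw [Subgroup.eq_top_iff']
  intro M
  obtain ⟨c₀, k, h⟩ := exists_num (M 1 0)
  obtain ⟨s, c', hodd, hcs, -⟩ := odd_part c₀.natAbs c₀ rfl
  refine main_induction c'.natAbs M k s c' hodd ?_ rfl
  rw [h, hcs]
  push_cast
  ring


theorem closure_c_t_eq_top :
    Subgroup.closure {((matC : SL2Zhalf) : PSL2Zhalf), ((matT : SL2Zhalf) : PSL2Zhalf)} =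
      (⊤ : Subgroup PSL2Zhalf) := by
  have himg : ({((matC : SL2Zhalf) : PSL2Zhalf), ((matT : SL2Zhalf) : PSL2Zhalf)} :
      Set PSL2Zhalf) = (QuotientGroup.mk' (Subgroup.center SL2Zhalf)) '' {matC, matT} := by
    rw [Set.image_pair]
    rfl
  rw [himg, ← MonoidHom.map_closure]
  rw [show Subgroup.closure {matC, matT} = ⊤ from KK_eq_top]
  exact Subgroup.map_top_of_surjective _ (QuotientGroup.mk'_surjective _)
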